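/- Let $\lambda_1 > \mu_1 > \lambda_2 > \cdots > \lambda_{N-1} > \mu_{N-1} > \lambda_N$ be interlacing real sequences. Define the $N\times N$ real matrix $u$ by $u_{Nj} = \big(\prod_l(\mu_l-\lambda_j)/\prod_{l\neq j}(\lambda_l-\lambda_j)\big)^{1/2}$ and, for $i<N$, $u_{ij} = (\lambda_j-\mu_i)^{-1}\,u_{Nj}\,\big(-\prod_l(\lambda_l-\mu_i)/\prod_{l\neq i}(\mu_l-\mu_i)\big)^{1/2}$. Then $u$ is orthogonal (unitary with real entries), and the principal $(N-1)\times(N-1)$ submatrix of $u\,\mathrm{diag}(\lambda_1,\dots,\lambda_N)\,u^{*}$ equals $\mathrm{diag}(\mu_1,\dots,\mu_{N-1})$. -/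

import Mathlib

open Finset

namespace Stmt3Aux

open Polynomial

variable {n : ℕ} {lam : Fin (n + 1) → ℝ} {μ : Fin n → ℝ}

/-- The quantity under the square root in the last row. -/
noncomputable def A (lam : Fin (n + 1) → ℝ) (μ : Fin n → ℝ) (j : Fin (n + 1)) : ℝ :=
  (∏ l : Fin n, (μ l - lam j)) / ∏ l ∈ univ \ {j}, (lam l - lam j)

/-- The quantity under the square root in the other rows. -/
noncomputable def B (lam : Fin (n + 1) → ℝ) (μ : Fin n → ℝ) (i : Fin n) : ℝ :=
  -((∏ l : Fin (n + 1), (lam l - μ i)) / ∏ l ∈ univ \ {i}, (μ l - μ i))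

lemma prod_neg {α : Type*} (s : Finset α) (f : α → ℝ) :
    ∏ i ∈ s, (-f i) = (-1) ^ s.card * ∏ i ∈ s, f i := by
  rw [← Finset.prod_const (-1 : ℝ), ← Finset.prod_mul_distrib]
  exact Finset.prod_congr rfl fun i _ => by ring

lemma prod_sdiff_singleton {M : Type*} [CommMonoid M] (j : Fin (n + 1)) (g : Fin (n + 1) → M) :
    ∏ m ∈ univ \ {j}, g m = ∏ l : Fin n, g (j.succAbove l) := by
  refine (Finset.prod_nbij (fun l => j.succAbove l) (fun a _ => ?_)
    (fun a _ b _ h => Fin.succAbove_right_injective h) (fun m hm => ?_) (fun a _ => rfl)).symm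
  · simp [Fin.succAbove_ne]
  · have hmj : m ≠ j := by simpa using hm
    rcases Fin.exists_succAbove_eq hmj with ⟨l, hl⟩
    exact ⟨l, by simp, hl⟩

lemma card_sdiff_fin (j : Fin (n + 1)) : #(univ \ {j} : Finset (Fin (n + 1))) = n := by
  rw [Finset.card_sdiff_of_subset (by simp)]
  simp

lemma card_sdiff_fin' (i : Fin n) : #(univ \ {i} : Finset (Fin n)) = n - 1 := by
  rw [Finset.card_sdiff_of_subset (by simp)]
  simp

section Interlace

variable (hinter : ∀ i : Fin n, μ i < lam i.castSucc ∧ lam i.succ < μ i)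

include hinter

lemma lam_anti : StrictAnti lam := by
  rw [Fin.strictAnti_iff_succ_lt]
  exact fun i => (hinter i).2.trans (hinter i).1

lemma mu_lt_lam {i : Fin n} {j : Fin (n + 1)} (h : j ≤ i.castSucc) : μ i < lam j :=
  lt_of_lt_of_le (hinter i).1 ((lam_anti hinter).antitone h)

lemma lam_lt_mu {i : Fin n} {j : Fin (n + 1)} (h : i.succ ≤ j) : lam j < μ i :=
  lt_of_le_of_lt ((lam_anti hinter).antitone h) (hinter i).2

lemma lam_ne_mu (j : Fin (n + 1)) (i : Fin n) : lam j ≠ μ i := by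
  rcases le_or_gt j i.castSucc with h | h
  · exact (mu_lt_lam hinter h).ne'
  · exact (lam_lt_mu hinter (Fin.castSucc_lt_iff_succ_le.mp h)).ne

lemma mu_lt {i k : Fin n} (h : i < k) : μ k < μ i := by
  have h1 : i.succ ≤ k.castSucc := by
    simp only [Fin.le_def, Fin.val_succ, Fin.coe_castSucc]
    exact h
  exact ((hinter k).1.trans_le ((lam_anti hinter).antitone h1)).trans (hinter i).2

lemma mu_ne {i k : Fin n} (h : i ≠ k) : μ i ≠ μ k := by
  rcases h.lt_or_gt with h' | h'
  · exact (mu_lt hinter h').ne'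
  · exact (mu_lt hinter h').ne

lemma lam_inj : Function.Injective lam := (lam_anti hinter).injective

lemma A_pos (j : Fin (n + 1)) : 0 < A lam μ j := by
  rw [A, prod_sdiff_singleton, ← Finset.prod_div_distrib]
  apply Finset.prod_pos
  intro l _
  rcases lt_or_ge l.castSucc j with h | h
  · have h1 : lam j < μ l := lam_lt_mu hinter (Fin.castSucc_lt_iff_succ_le.mp h)
    have h2 : lam j < lam l.castSucc := (lam_anti hinter) h
    rw [Fin.succAbove_of_castSucc_lt _ _ h]
    exact div_pos (by linarith) (by linarith)
  · have h1 : μ l < lam j := mu_lt_lam hinter h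
    have h2 : lam l.succ < lam j := (lam_anti hinter) (lt_of_le_of_lt h (Fin.castSucc_lt_succ (i := l)))
    rw [Fin.succAbove_of_le_castSucc _ _ h]
    exact div_pos_of_neg_of_neg (by linarith) (by linarith)

lemma lam_prod_ne (j : Fin (n + 1)) :
    ∏ l ∈ univ \ {j}, (lam l - lam j) ≠ 0 := by
  rw [Finset.prod_ne_zero_iff]
  intro l hl
  have hlj : l ≠ j := by simpa using hl
  exact sub_ne_zero.mpr fun h => hlj (lam_inj hinter h)

lemma A_mul (j : Fin (n + 1)) :
    A lam μ j * ∏ l ∈ univ \ {j}, (lam j - lam l) = ∏ l : Fin n, (lam j - μ l) := by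
  have h1 : ∏ l ∈ univ \ {j}, (lam j - lam l)
      = (-1) ^ n * ∏ l ∈ univ \ {j}, (lam l - lam j) := by
    have h := prod_neg (univ \ {j}) (fun l => lam l - lam j)
    rw [card_sdiff_fin (n := n) j] at h
    rw [← h]
    exact Finset.prod_congr rfl fun l _ => by ring
  have h2 : (∏ l : Fin n, (μ l - lam j)) = (-1) ^ n * ∏ l : Fin n, (lam j - μ l) := by
    have h := prod_neg (univ : Finset (Fin n)) (fun l => lam j - μ l)
    rw [Finset.card_univ, Fintype.card_fin] at h
    rw [← h]
    exact Finset.prod_congr rfl fun l _ => by ring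
  have hD := lam_prod_ne hinter j
  have key : ∀ a b : ℝ, b ≠ 0 → ((-1 : ℝ) ^ n * a / b) * ((-1 : ℝ) ^ n * b) = a := by
    intro a b hb
    have hpow : ((-1 : ℝ)) ^ n * ((-1 : ℝ)) ^ n = 1 := by rw [← mul_pow]; norm_num
    calc ((-1 : ℝ) ^ n * a / b) * ((-1 : ℝ) ^ n * b)
        = ((-1 : ℝ) ^ n * (-1 : ℝ) ^ n) * (a / b * b) := by ring
      _ = a := by rw [hpow, one_mul, div_mul_cancel₀ _ hb]
  rw [A, h1, h2]
  exact key _ _ hD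

lemma main_id :
    (∏ l : Fin n, (X - C (μ l))) =
      ∑ j : Fin (n + 1), C (A lam μ j) * ∏ l ∈ univ \ {j}, (X - C (lam l)) := by
  have h : (∏ l : Fin n, (X - C (μ l)))
      - ∑ j : Fin (n + 1), C (A lam μ j) * ∏ l ∈ univ \ {j}, (X - C (lam l)) = 0 := by
    apply Polynomial.eq_zero_of_natDegree_lt_card_of_eval_eq_zero _ (lam_inj hinter)
    · intro m
      simp only [eval_sub, eval_prod, eval_finset_sum, eval_mul, eval_C, eval_X, sub_eq_zero]
      rw [Finset.sum_eq_single m]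
      · exact (A_mul hinter m).symm
      · intro j _ hjm
        have hm : m ∈ univ \ {j} := Finset.mem_sdiff.mpr ⟨Finset.mem_univ m, by simp [Ne.symm hjm]⟩
        exact mul_eq_zero_of_right _ (Finset.prod_eq_zero hm (sub_self (lam m)))
      · intro h; exact absurd (Finset.mem_univ m) h
    · rw [Fintype.card_fin]
      apply Nat.lt_succ_of_le
      apply le_trans (Polynomial.natDegree_sub_le _ _)
      apply max_le
      · apply le_trans (Polynomial.natDegree_prod_le _ _)
        simp [Polynomial.natDegree_X_sub_C]
      · apply le_trans (Polynomial.natDegree_sum_le _ _)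
        apply Finset.sup_le
        intro j _
        apply le_trans (Polynomial.natDegree_mul_le)
        rw [Polynomial.natDegree_C, zero_add]
        apply le_trans (Polynomial.natDegree_prod_le _ _)
        simp [Polynomial.natDegree_X_sub_C, card_sdiff_fin (n := n) j]
  exact sub_eq_zero.mp h
omit hinter in
lemma coeff_G (j : Fin (n + 1)) :
    (∏ l ∈ univ \ {j}, (X - C (lam l))).coeff n = 1 := by
  have hm : (∏ l ∈ univ \ {j}, (X - C (lam l))).Monic :=
    monic_prod_of_monic _ _ fun l _ => monic_X_sub_C _
  have hd : (∏ l ∈ univ \ {j}, (X - C (lam l))).natDegree = n := by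
    rw [Polynomial.natDegree_prod _ _ fun l _ => X_sub_C_ne_zero _]
    simp [Polynomial.natDegree_X_sub_C, card_sdiff_fin (n := n) j]
  have h := hm.coeff_natDegree
  rwa [hd] at h

omit hinter in
lemma coeff_P : (∏ l : Fin n, (X - C (μ l))).coeff n = 1 := by
  have hm : (∏ l : Fin n, (X - C (μ l))).Monic :=
    monic_prod_of_monic _ _ fun l _ => monic_X_sub_C _
  have hd : (∏ l : Fin n, (X - C (μ l))).natDegree = n := by
    rw [Polynomial.natDegree_prod _ _ fun l _ => X_sub_C_ne_zero _]
    simp [Polynomial.natDegree_X_sub_C]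
  have h := hm.coeff_natDegree
  rwa [hd] at h

lemma F1 : ∑ j : Fin (n + 1), A lam μ j = 1 := by
  have h := congrArg (fun p => Polynomial.coeff p n) (main_id hinter)
  simp only [Polynomial.finset_sum_coeff, Polynomial.coeff_C_mul, coeff_G, mul_one,
    coeff_P] at h
  exact h.symm

lemma F2' (i : Fin n) : ∑ j : Fin (n + 1), A lam μ j * (μ i - lam j)⁻¹ = 0 := by
  have hG : (∏ l : Fin (n + 1), (μ i - lam l)) ≠ 0 :=
    Finset.prod_ne_zero_iff.mpr fun l _ => sub_ne_zero.mpr (Ne.symm (lam_ne_mu hinter l i))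
  have h := congrArg (Polynomial.eval (μ i)) (main_id hinter)
  simp only [Polynomial.eval_prod, Polynomial.eval_finset_sum, Polynomial.eval_mul,
    Polynomial.eval_sub, Polynomial.eval_X, Polynomial.eval_C] at h
  rw [Finset.prod_eq_zero (Finset.mem_univ i) (sub_self (μ i))] at h
  have h2 : ∀ j : Fin (n + 1), A lam μ j * ∏ l ∈ univ \ {j}, (μ i - lam l)
      = (A lam μ j * (μ i - lam j)⁻¹) * ∏ l : Fin (n + 1), (μ i - lam l) := by
    intro j
    have hj : (μ i - lam j) ≠ 0 := sub_ne_zero.mpr (Ne.symm (lam_ne_mu hinter j i))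
    have e1 : ∏ l : Fin (n + 1), (μ i - lam l)
        = (∏ l ∈ univ \ {j}, (μ i - lam l)) * (μ i - lam j) :=
      Finset.prod_eq_prod_diff_singleton_mul (Finset.mem_univ j) _
    rw [e1]
    field_simp
  rw [Finset.sum_congr rfl (fun j _ => h2 j), ← Finset.sum_mul] at h
  rcases mul_eq_zero.mp h.symm with h3 | h3
  · exact h3
  · exact absurd h3 hG

lemma F2 (i : Fin n) : ∑ j : Fin (n + 1), A lam μ j * (lam j - μ i)⁻¹ = 0 := by
  have hflip : ∀ j : Fin (n + 1), A lam μ j * (lam j - μ i)⁻¹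
      = -(A lam μ j * (μ i - lam j)⁻¹) := by
    intro j
    rw [show lam j - μ i = -(μ i - lam j) by ring, inv_neg]
    ring
  simp_rw [hflip]
  rw [Finset.sum_neg_distrib, F2' hinter i, neg_zero]

omit hinter in
lemma derivative_finset_prod {ι : Type*} [DecidableEq ι] (s : Finset ι) (f : ι → Polynomial ℝ) :
    Polynomial.derivative (∏ i ∈ s, f i)
      = ∑ i ∈ s, (∏ j ∈ s.erase i, f j) * Polynomial.derivative (f i) := by
  induction s using Finset.induction_on with
  | empty => simp
  | @insert a s h ih =>
    rw [Finset.prod_insert h, Polynomial.derivative_mul, ih, Finset.sum_insert h,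
      Finset.erase_insert h, Finset.mul_sum]
    congr 1
    · rw [mul_comm]
    · refine Finset.sum_congr rfl fun i hi => ?_
      rw [show (insert a s).erase i = insert a (s.erase i) from
          Finset.erase_insert_of_ne (fun he => h (he ▸ hi)),
        Finset.prod_insert (fun hmem => h (Finset.mem_of_mem_erase hmem)), mul_assoc]

lemma Tsum (i : Fin n) :
    ∏ l ∈ univ \ {i}, (μ i - μ l)
      = -((∏ l : Fin (n + 1), (μ i - lam l))
          * ∑ j : Fin (n + 1), A lam μ j * ((μ i - lam j)⁻¹ * (μ i - lam j)⁻¹)) := by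
  have hne : ∀ j : Fin (n + 1), (μ i - lam j) ≠ 0 :=
    fun j => sub_ne_zero.mpr (Ne.symm (lam_ne_mu hinter j i))
  have h := congrArg (fun p => Polynomial.eval (μ i) (Polynomial.derivative p)) (main_id hinter)
  simp only [derivative_finset_prod, Polynomial.derivative_sum, Polynomial.derivative_mul,
    Polynomial.derivative_C, Polynomial.derivative_X_sub_C, zero_mul, zero_add, mul_one,
    Polynomial.eval_finset_sum, Polynomial.eval_mul, Polynomial.eval_prod, Polynomial.eval_sub,
    Polynomial.eval_X, Polynomial.eval_C, Polynomial.eval_one] at h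
  rw [Finset.sum_eq_single i] at h
  rotate_left
  · intro m _ hmi
    exact Finset.prod_eq_zero (Finset.mem_erase.mpr ⟨Ne.symm hmi, Finset.mem_univ i⟩)
      (sub_self (μ i))
  · intro hi; exact absurd (Finset.mem_univ i) hi
  have key : ∀ j : Fin (n + 1),
      A lam μ j * ∑ m ∈ univ \ {j}, ∏ l ∈ (univ \ {j}).erase m, (μ i - lam l)
      = ((∏ l : Fin (n + 1), (μ i - lam l)) * (∑ m : Fin (n + 1), (μ i - lam m)⁻¹))
          * (A lam μ j * (μ i - lam j)⁻¹)
        - (∏ l : Fin (n + 1), (μ i - lam l))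
            * (A lam μ j * ((μ i - lam j)⁻¹ * (μ i - lam j)⁻¹)) := by
    intro j
    have hprod : ∀ m ∈ univ \ {j}, ∏ l ∈ (univ \ {j}).erase m, (μ i - lam l)
        = (∏ l : Fin (n + 1), (μ i - lam l)) * ((μ i - lam j)⁻¹ * (μ i - lam m)⁻¹) := by
      intro m hm
      have hmj : m ≠ j := by simpa using (Finset.mem_sdiff.mp hm).2
      have e1 : ∏ l : Fin (n + 1), (μ i - lam l)
          = (μ i - lam j) * ∏ l ∈ univ.erase j, (μ i - lam l) :=
        (Finset.mul_prod_erase univ _ (Finset.mem_univ j)).symm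
      have e2 : ∏ l ∈ univ.erase j, (μ i - lam l)
          = (μ i - lam m) * ∏ l ∈ (univ.erase j).erase m, (μ i - lam l) :=
        (Finset.mul_prod_erase _ _ (Finset.mem_erase.mpr ⟨hmj, Finset.mem_univ m⟩)).symm
      rw [show (univ \ {j}).erase m = (univ.erase j).erase m by rw [Finset.erase_eq univ j],
        e1, e2]
      have ha := hne j
      have hb := hne m
      field_simp
    rw [Finset.sum_congr rfl hprod]
    have hsub : ∑ m ∈ univ \ {j}, (μ i - lam m)⁻¹
        = (∑ m : Fin (n + 1), (μ i - lam m)⁻¹) - (μ i - lam j)⁻¹ := by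
      rw [← Finset.erase_eq]
      exact eq_sub_of_add_eq'
        (Finset.add_sum_erase univ (fun m => (μ i - lam m)⁻¹) (Finset.mem_univ j))
    rw [← Finset.mul_sum, ← Finset.mul_sum, hsub]
    ring
  rw [Finset.sum_congr rfl (fun j _ => key j), Finset.sum_sub_distrib,
    ← Finset.mul_sum, ← Finset.mul_sum, F2' hinter i, mul_zero, zero_sub] at h
  rw [Finset.erase_eq] at h
  exact h

lemma mu_prod_ne (i : Fin n) : ∏ l ∈ univ \ {i}, (μ i - μ l) ≠ 0 := by
  rw [Finset.prod_ne_zero_iff]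
  intro l hl
  have hli : l ≠ i := by simpa using (Finset.mem_sdiff.mp hl).2
  exact sub_ne_zero.mpr (mu_ne hinter (Ne.symm hli))

lemma Bval (i : Fin n) :
    B lam μ i = -((∏ l : Fin (n + 1), (μ i - lam l)) / ∏ l ∈ univ \ {i}, (μ i - μ l)) := by
  have h1 : ∏ l : Fin (n + 1), (lam l - μ i)
      = (-1 : ℝ) ^ (n + 1) * ∏ l : Fin (n + 1), (μ i - lam l) := by
    have h := prod_neg (univ : Finset (Fin (n + 1))) (fun l => μ i - lam l)
    rw [Finset.card_univ, Fintype.card_fin] at h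
    rw [← h]; exact Finset.prod_congr rfl fun l _ => by ring
  have h2 : ∏ l ∈ univ \ {i}, (μ l - μ i)
      = (-1 : ℝ) ^ (n - 1) * ∏ l ∈ univ \ {i}, (μ i - μ l) := by
    have h := prod_neg (univ \ {i} : Finset (Fin n)) (fun l => μ i - μ l)
    rw [card_sdiff_fin'] at h
    rw [← h]; exact Finset.prod_congr rfl fun l _ => by ring
  have hpow : ((-1 : ℝ)) ^ (n + 1) = ((-1 : ℝ)) ^ (n - 1) := by
    have hpos : 0 < n := i.pos
    obtain ⟨m, hm⟩ : ∃ m, n = m + 1 := ⟨n - 1, by omega⟩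
    subst hm
    rw [pow_succ, pow_succ]
    simp
  have hc : ((-1 : ℝ)) ^ (n - 1) ≠ 0 := pow_ne_zero _ (by norm_num)
  rw [B, h1, h2, hpow, mul_div_mul_left _ _ hc]

lemma Fdiag (i : Fin n) :
    (∑ j : Fin (n + 1), A lam μ j * ((lam j - μ i)⁻¹ * (lam j - μ i)⁻¹)) * B lam μ i = 1 := by
  have hG : (∏ l : Fin (n + 1), (μ i - lam l)) ≠ 0 :=
    Finset.prod_ne_zero_iff.mpr fun l _ => sub_ne_zero.mpr (Ne.symm (lam_ne_mu hinter l i))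
  have hT : ∑ j : Fin (n + 1), A lam μ j * ((lam j - μ i)⁻¹ * (lam j - μ i)⁻¹)
      = ∑ j : Fin (n + 1), A lam μ j * ((μ i - lam j)⁻¹ * (μ i - lam j)⁻¹) := by
    refine Finset.sum_congr rfl fun j _ => ?_
    rw [show lam j - μ i = -(μ i - lam j) by ring, inv_neg]
    ring
  have ht := Tsum hinter i
  have hT' : (∑ j : Fin (n + 1), A lam μ j * ((μ i - lam j)⁻¹ * (μ i - lam j)⁻¹)) ≠ 0 := by
    intro h0
    rw [h0, mul_zero, neg_zero] at ht
    exact mu_prod_ne hinter i ht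
  rw [hT, Bval hinter i, ht]
  rw [div_neg, neg_neg, div_mul_cancel_left₀ hG, mul_inv_cancel₀ hT']

lemma Foff {i k : Fin n} (hik : i ≠ k) :
    ∑ j : Fin (n + 1), A lam μ j * ((lam j - μ i)⁻¹ * (lam j - μ k)⁻¹) = 0 := by
  have hkey : ∀ j : Fin (n + 1), A lam μ j * ((lam j - μ i)⁻¹ * (lam j - μ k)⁻¹)
      = (μ i - μ k)⁻¹ * (A lam μ j * (lam j - μ i)⁻¹ - A lam μ j * (lam j - μ k)⁻¹) := by
    intro j
    have h1 : lam j - μ i ≠ 0 := sub_ne_zero.mpr (lam_ne_mu hinter j i)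
    have h2 : lam j - μ k ≠ 0 := sub_ne_zero.mpr (lam_ne_mu hinter j k)
    have h3 : μ i - μ k ≠ 0 := sub_ne_zero.mpr (mu_ne hinter hik)
    field_simp
    ring
  simp_rw [hkey]
  rw [← Finset.mul_sum, Finset.sum_sub_distrib, F2 hinter i, F2 hinter k]
  simp

lemma FoffL {i k : Fin n} (hik : i ≠ k) :
    ∑ j : Fin (n + 1), lam j * (A lam μ j * ((lam j - μ i)⁻¹ * (lam j - μ k)⁻¹)) = 0 := by
  have hkey : ∀ j : Fin (n + 1), lam j * (A lam μ j * ((lam j - μ i)⁻¹ * (lam j - μ k)⁻¹))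
      = (μ i - μ k)⁻¹ * (μ i * (A lam μ j * (lam j - μ i)⁻¹)
          - μ k * (A lam μ j * (lam j - μ k)⁻¹)) := by
    intro j
    have h1 : lam j - μ i ≠ 0 := sub_ne_zero.mpr (lam_ne_mu hinter j i)
    have h2 : lam j - μ k ≠ 0 := sub_ne_zero.mpr (lam_ne_mu hinter j k)
    have h3 : μ i - μ k ≠ 0 := sub_ne_zero.mpr (mu_ne hinter hik)
    field_simp
    ring
  simp_rw [hkey]
  rw [← Finset.mul_sum, Finset.sum_sub_distrib, ← Finset.mul_sum, ← Finset.mul_sum,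
    F2 hinter i, F2 hinter k]
  simp

lemma FdiagL (i : Fin n) :
    ∑ j : Fin (n + 1), lam j * (A lam μ j * ((lam j - μ i)⁻¹ * (lam j - μ i)⁻¹))
      = μ i * ∑ j : Fin (n + 1), A lam μ j * ((lam j - μ i)⁻¹ * (lam j - μ i)⁻¹) := by
  have hkey : ∀ j : Fin (n + 1), lam j * (A lam μ j * ((lam j - μ i)⁻¹ * (lam j - μ i)⁻¹))
      = A lam μ j * (lam j - μ i)⁻¹
        + μ i * (A lam μ j * ((lam j - μ i)⁻¹ * (lam j - μ i)⁻¹)) := by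
    intro j
    have h1 : lam j - μ i ≠ 0 := sub_ne_zero.mpr (lam_ne_mu hinter j i)
    field_simp
    ring
  simp_rw [hkey]
  rw [Finset.sum_add_distrib, F2 hinter i, zero_add, ← Finset.mul_sum]

end Interlace

end Stmt3Aux

open Stmt3Aux in

/-- Lemma 6.2 (unitarity of `u(μ,λ)`): for interlacing sequences
`λ₁ > μ₁ > λ₂ > ⋯ > λ_{N-1} > μ_{N-1} > λ_N`, the matrix `u` with entries
`u_{Nj} = √(∏_l(μ_l-λ_j)/∏_{l≠j}(λ_l-λ_j))` and, for `i < N`,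
`u_{ij} = (λ_j-μ_i)⁻¹ u_{Nj} √(-∏_l(λ_l-μ_i)/∏_{l≠i}(μ_l-μ_i))`
is orthogonal, and the principal `(N-1)×(N-1)` submatrix of `u diag(λ) uᵀ` is `diag(μ)`. -/
theorem stmt3 (n : ℕ) (lam : Fin (n + 1) → ℝ) (μ : Fin n → ℝ)
    (hinter : ∀ i : Fin n, μ i < lam i.castSucc ∧ lam i.succ < μ i)
    (u : Matrix (Fin (n + 1)) (Fin (n + 1)) ℝ)
    (hlast : ∀ j : Fin (n + 1), u (Fin.last n) j =
      Real.sqrt ((∏ l : Fin n, (μ l - lam j)) / ∏ l ∈ univ \ {j}, (lam l - lam j)))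
    (hrow : ∀ (i : Fin n) (j : Fin (n + 1)), u i.castSucc j =
      (lam j - μ i)⁻¹ * u (Fin.last n) j *
        Real.sqrt (-((∏ l : Fin (n + 1), (lam l - μ i)) / ∏ l ∈ univ \ {i}, (μ l - μ i)))) :
    u * u.transpose = 1 ∧ u.transpose * u = 1 ∧
      ∀ i i' : Fin n,
        (u * Matrix.diagonal lam * u.transpose) i.castSucc i'.castSucc
          = Matrix.diagonal μ i i' := by

  have hA : ∀ j, 0 ≤ A lam μ j := fun j => (A_pos hinter j).le
  have hu_last : ∀ j, u (Fin.last n) j = Real.sqrt (A lam μ j) := hlast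
  have hu_row : ∀ (i : Fin n) (j : Fin (n + 1)), u i.castSucc j
      = (lam j - μ i)⁻¹ * Real.sqrt (A lam μ j) * Real.sqrt (B lam μ i) := by
    intro i j
    rw [hrow i j, hlast j]
    rfl
  have hAA : ∀ j, Real.sqrt (A lam μ j) * Real.sqrt (A lam μ j) = A lam μ j :=
    fun j => Real.mul_self_sqrt (hA j)
  have hB : ∀ i : Fin n, 0 ≤ B lam μ i := by
    intro i
    have hT0 : 0 ≤ ∑ j : Fin (n + 1), A lam μ j * ((lam j - μ i)⁻¹ * (lam j - μ i)⁻¹) :=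
      Finset.sum_nonneg fun j _ => mul_nonneg (hA j) (mul_self_nonneg _)
    nlinarith [Fdiag hinter i]
  have hBB : ∀ i, Real.sqrt (B lam μ i) * Real.sqrt (B lam μ i) = B lam μ i :=
    fun i => Real.mul_self_sqrt (hB i)
  have horth : ∀ p q : Fin (n + 1), ∑ j, u p j * u q j = if p = q then 1 else 0 := by
    intro p q
    induction p using Fin.lastCases with
    | last =>
      induction q using Fin.lastCases with
      | last =>
        rw [if_pos rfl, Finset.sum_congr rfl fun j _ => by rw [hu_last j, hAA j]]
        exact F1 hinter
      | cast k =>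
        rw [if_neg (Fin.castSucc_lt_last k).ne']
        have hterm : ∀ j, u (Fin.last n) j * u k.castSucc j
            = Real.sqrt (B lam μ k) * (A lam μ j * (lam j - μ k)⁻¹) := by
          intro j
          rw [hu_last j, hu_row k j]
          linear_combination ((lam j - μ k)⁻¹ * Real.sqrt (B lam μ k)) * hAA j
        rw [Finset.sum_congr rfl fun j _ => hterm j, ← Finset.mul_sum, F2 hinter k, mul_zero]
    | cast i =>
      induction q using Fin.lastCases with
      | last =>
        rw [if_neg (Fin.castSucc_lt_last i).ne]
        have hterm : ∀ j, u i.castSucc j * u (Fin.last n) j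
            = Real.sqrt (B lam μ i) * (A lam μ j * (lam j - μ i)⁻¹) := by
          intro j
          rw [hu_last j, hu_row i j]
          linear_combination ((lam j - μ i)⁻¹ * Real.sqrt (B lam μ i)) * hAA j
        rw [Finset.sum_congr rfl fun j _ => hterm j, ← Finset.mul_sum, F2 hinter i, mul_zero]
      | cast k =>
        by_cases hik : i = k
        · subst hik
          rw [if_pos rfl]
          have hterm : ∀ j, u i.castSucc j * u i.castSucc j
              = A lam μ j * ((lam j - μ i)⁻¹ * (lam j - μ i)⁻¹) * B lam μ i := by
            intro j
            rw [hu_row i j]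
            linear_combination
              ((lam j - μ i)⁻¹ * (lam j - μ i)⁻¹ * Real.sqrt (B lam μ i) * Real.sqrt (B lam μ i))
                  * hAA j
                + ((lam j - μ i)⁻¹ * (lam j - μ i)⁻¹ * A lam μ j) * hBB i
          rw [Finset.sum_congr rfl fun j _ => hterm j, ← Finset.sum_mul]
          exact Fdiag hinter i
        · rw [if_neg (by simpa [Fin.castSucc_inj] using hik)]
          have hterm : ∀ j, u i.castSucc j * u k.castSucc j
              = Real.sqrt (B lam μ i) * Real.sqrt (B lam μ k)
                  * (A lam μ j * ((lam j - μ i)⁻¹ * (lam j - μ k)⁻¹)) := by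
            intro j
            rw [hu_row i j, hu_row k j]
            linear_combination
              ((lam j - μ i)⁻¹ * (lam j - μ k)⁻¹ * Real.sqrt (B lam μ i) * Real.sqrt (B lam μ k))
                * hAA j
          rw [Finset.sum_congr rfl fun j _ => hterm j, ← Finset.mul_sum, Foff hinter hik,
            mul_zero]
  have huut : u * u.transpose = 1 := by
    ext p q
    rw [Matrix.mul_apply]
    simp only [Matrix.transpose_apply]
    rw [horth p q, Matrix.one_apply]
  refine ⟨huut, mul_eq_one_comm.mp huut, ?_⟩
  intro i k
  rw [Matrix.mul_apply]
  simp only [Matrix.transpose_apply, Matrix.mul_diagonal]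
  have hweight : ∑ j, u i.castSucc j * lam j * u k.castSucc j
      = if i = k then μ i else 0 := by
    by_cases hik : i = k
    · subst hik
      rw [if_pos rfl]
      have hterm : ∀ j, u i.castSucc j * lam j * u i.castSucc j
          = lam j * (A lam μ j * ((lam j - μ i)⁻¹ * (lam j - μ i)⁻¹)) * B lam μ i := by
        intro j
        rw [hu_row i j]
        linear_combination
          (lam j * (lam j - μ i)⁻¹ * (lam j - μ i)⁻¹ * Real.sqrt (B lam μ i)
              * Real.sqrt (B lam μ i)) * hAA j
            + (lam j * (lam j - μ i)⁻¹ * (lam j - μ i)⁻¹ * A lam μ j) * hBB i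
      rw [Finset.sum_congr rfl fun j _ => hterm j, ← Finset.sum_mul, FdiagL hinter i,
        mul_assoc, Fdiag hinter i, mul_one]
    · rw [if_neg hik]
      have hterm : ∀ j, u i.castSucc j * lam j * u k.castSucc j
          = Real.sqrt (B lam μ i) * Real.sqrt (B lam μ k)
              * (lam j * (A lam μ j * ((lam j - μ i)⁻¹ * (lam j - μ k)⁻¹))) := by
        intro j
        rw [hu_row i j, hu_row k j]
        linear_combination
          (lam j * (lam j - μ i)⁻¹ * (lam j - μ k)⁻¹ * Real.sqrt (B lam μ i)
              * Real.sqrt (B lam μ k)) * hAA j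
      rw [Finset.sum_congr rfl fun j _ => hterm j, ← Finset.mul_sum, FoffL hinter hik,
        mul_zero]
  rw [hweight, Matrix.diagonal_apply]
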